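/- Let U be a complex unitary matrix of size d1·d2, indexed by pairs from Fin d1 × Fin d2, with d1, d2 ≥ 1. Then z_{d1:d2}(U) ≤ |tr(U)| / (d1·d2); i.e., the minimum over unit vectors ψ1 ∈ ℂ^{d1}, ψ2 ∈ ℂ^{d2} of |⟨ψ1⊗ψ2, U(ψ1⊗ψ2)⟩| is at most |tr(U)| / (d1·d2), because the barycenter of the spectrum tr(U)/(d1·d2) always belongs to the product numerical range W^⊗_{d1:d2}(U). -/

import Mathlib

open scoped ComplexInnerProductSpace
open Complex Finset

section Aux

variable {E : Type*} [NormedAddCommGroup E] [InnerProductSpace ℂ E]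

/-- The numerical range of a linear map. -/
def numRange (T : E →ₗ[ℂ] E) : Set ℂ := {z | ∃ x : E, ‖x‖ = 1 ∧ ⟪x, T x⟫ = z}

lemma exists_phase (α β : ℂ) : ∃ c : ℂ, ‖c‖ = 1 ∧ (c * α + (starRingEnd ℂ) c * β).im = 0 := by
  set h : ℝ → ℝ := fun θ => (Complex.exp (θ * Complex.I) * α
    + Complex.exp (-(θ * Complex.I)) * β).im with hh
  have hcont : Continuous h := by fun_prop
  have hpi : h Real.pi = - h 0 := by
    have e1 : Complex.exp ((Real.pi : ℂ) * Complex.I) = -1 := Complex.exp_pi_mul_I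
    have e2 : Complex.exp (-((Real.pi : ℂ) * Complex.I)) = -1 := by
      rw [Complex.exp_neg, e1]; norm_num
    simp [hh, e1, e2]
    ring
  have : ∃ θ : ℝ, h θ = 0 := by
    rcases le_total (h 0) 0 with h0 | h0
    · have : (0:ℝ) ∈ Set.Icc (h 0) (h Real.pi) := by
        constructor
        · exact h0
        · rw [hpi]; linarith
      have := intermediate_value_Icc (by positivity : (0:ℝ) ≤ Real.pi) hcont.continuousOn this
      obtain ⟨θ, _, hθ⟩ := this
      exact ⟨θ, hθ⟩
    · have : (0:ℝ) ∈ Set.Icc (h Real.pi) (h 0) := by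
        constructor
        · rw [hpi]; linarith
        · exact h0
      have := intermediate_value_Icc' (by positivity : (0:ℝ) ≤ Real.pi) hcont.continuousOn this
      obtain ⟨θ, _, hθ⟩ := this
      exact ⟨θ, hθ⟩
  obtain ⟨θ, hθ⟩ := this
  refine ⟨Complex.exp (θ * Complex.I), ?_, ?_⟩
  · simp [Complex.norm_exp]
  · have hconj : (starRingEnd ℂ) (Complex.exp (θ * Complex.I)) = Complex.exp (-(θ * Complex.I)) := by
      rw [← Complex.exp_conj]
      congr 1
      simp [Complex.ext_iff]
    rw [hconj]
    exact hθ


lemma numRange_convex (T : E →ₗ[ℂ] E) : Convex ℝ (numRange T) := by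
  rintro p ⟨x, hx, hxp⟩ q ⟨y, hy, hyq⟩ a b ha hb hab
  by_cases hpq : p = q
  · subst hpq
    refine ⟨x, hx, ?_⟩
    rw [hxp, ← add_smul, hab, one_smul]
  -- main case
  · set S : E →ₗ[ℂ] E := (p - q)⁻¹ • (T - q • LinearMap.id) with hS
    have hpq' : p - q ≠ 0 := sub_ne_zero.mpr hpq
    have hSval : ∀ z : E, ⟪z, S z⟫ = (p - q)⁻¹ * (⟪z, T z⟫ - q * ⟪z, z⟫) := by
      intro z
      simp [hS, inner_smul_right, inner_sub_right]
    have hxx : ⟪x, x⟫ = 1 := by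
      rw [inner_self_eq_norm_sq_to_K, hx]; norm_num
    have hyy : ⟪y, y⟫ = 1 := by
      rw [inner_self_eq_norm_sq_to_K, hy]; norm_num
    have hSx : ⟪x, S x⟫ = 1 := by
      rw [hSval, hxp, hxx, mul_one, inv_mul_cancel₀ hpq']
    have hSy : ⟪y, S y⟫ = 0 := by
      rw [hSval, hyq, hyy, mul_one, sub_self, mul_zero]
    obtain ⟨c, hc1, hcim⟩ := exists_phase ⟪x, S y⟫ ⟪y, S x⟫
    set y' : E := c • y with hy'
    have hy'1 : ‖y'‖ = 1 := by rw [hy', norm_smul, hc1, hy, mul_one]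
    have hSy' : ⟪y', S y'⟫ = 0 := by
      rw [hy', map_smul, inner_smul_left, inner_smul_right, hSy]
      ring
    set γ : ℂ := c * ⟪x, S y⟫ + (starRingEnd ℂ) c * ⟪y, S x⟫ with hγ
    have hcross1 : ⟪x, S y'⟫ = c * ⟪x, S y⟫ := by
      rw [hy', map_smul, inner_smul_right]
    have hcross2 : ⟪y', S x⟫ = (starRingEnd ℂ) c * ⟪y, S x⟫ := by
      rw [hy', inner_smul_left]
    set w : ℝ → E := fun t => ((1 - t : ℝ) : ℂ) • x + ((t : ℝ) : ℂ) • y' with hw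
    have hwval : ∀ t : ℝ, ⟪w t, S (w t)⟫ = (((1 - t)^2 : ℝ) : ℂ) + ((t * (1 - t) : ℝ) : ℂ) * γ := by
      intro t
      simp only [hw, map_add, map_smul, inner_add_left, inner_add_right, inner_smul_left,
        inner_smul_right, Complex.conj_ofReal, hSx, hSy', hcross1, hcross2, hγ]
      push_cast
      ring
    -- w t ≠ 0 on [0,1]
    have hwne : ∀ t : ℝ, t ∈ Set.Icc (0:ℝ) 1 → w t ≠ 0 := by
      rintro t ⟨ht0, ht1⟩ hzero
      have h2 : ((t : ℝ) : ℂ) • y' = -(((1 - t : ℝ) : ℂ) • x) := by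
        rw [eq_neg_iff_add_eq_zero, add_comm]; exact hzero
      have hnorm : t = 1 - t := by
        have := congrArg norm h2
        simpa only [norm_smul, norm_neg, hy'1, hx, mul_one, Complex.norm_real,
          Real.norm_eq_abs, _root_.abs_of_nonneg ht0,
          _root_.abs_of_nonneg (show (0:ℝ) ≤ 1 - t by linarith)] using this
      have ht : t = 1/2 := by linarith
      have hyx : y' = -x := by
        have h2' : ((1/2 : ℝ) : ℂ) • y' = -(((1/2 : ℝ) : ℂ) • x) := by
          rw [ht] at h2
          convert h2 using 3 <;> norm_num
        have hhalf : ((1/2 : ℝ) : ℂ) ≠ 0 := by norm_num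
        have := congrArg (fun v => (((1/2 : ℝ) : ℂ))⁻¹ • v) h2'
        simpa [smul_smul, inv_mul_cancel₀ hhalf, smul_neg] using this
      rw [hyx] at hSy'
      simp only [map_neg, inner_neg_left, inner_neg_right, neg_neg, hSx] at hSy'
      exact one_ne_zero hSy'
    -- IVT
    have ha1 : a ≤ 1 := by linarith
    set F : ℝ → ℝ := fun t => (1 - t)^2 + t * (1 - t) * γ.re - a * ‖w t‖^2 with hF
    have hwcont : Continuous w := by
      rw [hw]; fun_prop
    have hFcont : Continuous F := by
      rw [hF]
      have : Continuous fun t : ℝ => ‖w t‖ := hwcont.norm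
      fun_prop
    have hw0 : w 0 = x := by simp [hw]
    have hw1 : w 1 = y' := by simp [hw]
    have hF0 : F 0 = 1 - a := by simp [hF, hw0, hx]
    have hF1 : F 1 = -a := by simp [hF, hw1, hy'1]
    have h0mem : (0:ℝ) ∈ Set.Icc (F 1) (F 0) := by
      rw [hF0, hF1]
      constructor <;> linarith
    obtain ⟨t, htmem, hFt⟩ := intermediate_value_Icc' (by norm_num : (0:ℝ) ≤ 1)
      hFcont.continuousOn h0mem
    have hwt0 : ‖w t‖ ≠ 0 := norm_ne_zero_iff.mpr (hwne t htmem)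
    have hFt' : (1 - t)^2 + t * (1 - t) * γ.re - a * ‖w t‖^2 = 0 := hFt
    have hinner : ⟪w t, S (w t)⟫ = ((a * ‖w t‖^2 : ℝ) : ℂ) := by
      rw [hwval t]
      apply Complex.ext
      · simp only [Complex.add_re, Complex.mul_re, Complex.ofReal_re, Complex.ofReal_im,
          zero_mul, mul_zero, sub_zero]
        linarith
      · simp only [Complex.add_im, Complex.mul_im, Complex.ofReal_im, Complex.ofReal_re,
          hcim, mul_zero, zero_mul, add_zero, zero_add]
    set z : E := ((‖w t‖⁻¹ : ℝ) : ℂ) • w t with hz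
    have hz1 : ‖z‖ = 1 := by
      rw [hz, norm_smul, Complex.norm_real, Real.norm_eq_abs, abs_inv, abs_norm,
        inv_mul_cancel₀ hwt0]
    have hzS : ⟪z, S z⟫ = (a : ℂ) := by
      have hn : ((‖w t‖ : ℝ) : ℂ) ≠ 0 := by
        simpa using hwt0
      rw [hz, map_smul, inner_smul_left, inner_smul_right, hinner, Complex.conj_ofReal]
      push_cast
      field_simp
    have hzz : ⟪z, z⟫ = 1 := by
      rw [inner_self_eq_norm_sq_to_K, hz1]; norm_num
    have hzT : ⟪z, T z⟫ = a • p + b • q := by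
      have := hSval z
      rw [hzS, hzz, mul_one] at this
      have hb' : (b : ℂ) = 1 - (a : ℂ) := by
        have h := congrArg (fun r : ℝ => (r : ℂ)) hab
        push_cast at h
        linear_combination h
      have : ⟪z, T z⟫ - q = (p - q) * (a : ℂ) := by
        field_simp at this
        linear_combination -this
      rw [Complex.real_smul, Complex.real_smul, hb']
      linear_combination this
    exact ⟨z, hz1, hzT⟩


end Aux

lemma aux_inner_toEuclideanLin {ι : Type*} [Fintype ι] [DecidableEq ι]
    (A : Matrix ι ι ℂ) (x : EuclideanSpace ℂ ι) :
    ⟪x, Matrix.toEuclideanLin A x⟫ = ∑ i, ∑ j, (starRingEnd ℂ) (x i) * (A i j * x j) := by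
  simp [PiLp.inner_apply, Matrix.toEuclideanLin_apply, Matrix.mulVec, dotProduct,
    RCLike.inner_apply, Finset.mul_sum, Finset.sum_mul]
  refine Finset.sum_congr rfl fun i _ => Finset.sum_congr rfl fun j _ => ?_
  ring


lemma trace_div_mem {n : ℕ} (hn : 0 < n) (A : Matrix (Fin n) (Fin n) ℂ) :
    A.trace / n ∈ numRange (Matrix.toEuclideanLin A) := by
  have hdiag : ∀ i : Fin n, A i i ∈ numRange (Matrix.toEuclideanLin A) := by
    intro i
    refine ⟨EuclideanSpace.single i 1, ?_, ?_⟩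
    · simp [EuclideanSpace.norm_single]
    · rw [aux_inner_toEuclideanLin]
      simp [EuclideanSpace.single_apply, Finset.mul_sum]
  have hconv := numRange_convex (Matrix.toEuclideanLin A)
  have hn' : (n : ℝ) ≠ 0 := Nat.cast_ne_zero.mpr hn.ne'
  have hmem := hconv.sum_mem (t := Finset.univ) (w := fun _ : Fin n => (n : ℝ)⁻¹)
    (z := fun i : Fin n => A i i)
    (fun i _ => by positivity)
    (by simp [Finset.card_univ, hn'])
    (fun i _ => hdiag i)
  convert hmem using 1
  rw [Matrix.trace]
  simp only [Complex.real_smul, ← Finset.mul_sum]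
  push_cast
  rw [div_eq_inv_mul]
  rfl


lemma sum4 {α β γ δ M : Type*} [AddCommMonoid M] [Fintype α] [Fintype β] [Fintype γ] [Fintype δ]
    (f : α → β → γ → δ → M) :
    ∑ j : α, ∑ j' : β, ∑ i : γ, ∑ i' : δ, f j j' i i'
      = ∑ i : γ, ∑ j : α, ∑ i' : δ, ∑ j' : β, f j j' i i' :=
  calc ∑ j : α, ∑ j' : β, ∑ i : γ, ∑ i' : δ, f j j' i i'
      = ∑ j : α, ∑ i : γ, ∑ j' : β, ∑ i' : δ, f j j' i i' :=
        Finset.sum_congr rfl fun _ _ => Finset.sum_comm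
    _ = ∑ i : γ, ∑ j : α, ∑ j' : β, ∑ i' : δ, f j j' i i' := Finset.sum_comm
    _ = ∑ i : γ, ∑ j : α, ∑ i' : δ, ∑ j' : β, f j j' i i' :=
        Finset.sum_congr rfl fun _ _ => Finset.sum_congr rfl fun _ _ => Finset.sum_comm


/-- The tensor (Kronecker) product of two vectors: `(ψ1 ⊗ ψ2)_{(i,j)} = (ψ1)_i · (ψ2)_j`. -/
noncomputable def tensorVec {d1 d2 : ℕ} (ψ1 : EuclideanSpace ℂ (Fin d1))
    (ψ2 : EuclideanSpace ℂ (Fin d2)) : EuclideanSpace ℂ (Fin d1 × Fin d2) :=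
  WithLp.toLp 2 (fun p => ψ1 p.1 * ψ2 p.2)

/-- Product numerical range `W^⊗_{d1:d2}(X) = {⟨ψ1⊗ψ2, X(ψ1⊗ψ2)⟩ : ‖ψ1‖ = ‖ψ2‖ = 1}`. -/
noncomputable def prodNumRange {d1 d2 : ℕ}
    (X : Matrix (Fin d1 × Fin d2) (Fin d1 × Fin d2) ℂ) : Set ℂ :=
  {z | ∃ (ψ1 : EuclideanSpace ℂ (Fin d1)) (ψ2 : EuclideanSpace ℂ (Fin d2)),
    ‖ψ1‖ = 1 ∧ ‖ψ2‖ = 1 ∧ ⟪tensorVec ψ1 ψ2, Matrix.toEuclideanLin X (tensorVec ψ1 ψ2)⟫ = z}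

/-- For a unitary `U` of size `d1·d2`, the barycenter of the spectrum
`tr(U)/(d1·d2)` belongs to the product numerical range `W^⊗_{d1:d2}(U)`, and therefore
`z_{d1:d2}(U) = inf {|x| : x ∈ W^⊗_{d1:d2}(U)} ≤ |tr(U)|/(d1·d2)`. -/
theorem stmt14 {d1 d2 : ℕ} (hd1 : 1 ≤ d1) (hd2 : 1 ≤ d2)
    (U : Matrix (Fin d1 × Fin d2) (Fin d1 × Fin d2) ℂ)
    (hU : U ∈ Matrix.unitaryGroup (Fin d1 × Fin d2) ℂ) :
    U.trace / ((d1 : ℂ) * d2) ∈ prodNumRange U ∧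
    sInf ((fun z : ℂ => ‖z‖) '' prodNumRange U) ≤ ‖U.trace‖ / ((d1 : ℝ) * d2) := by
  have hd1' : 0 < d1 := hd1
  have hd2' : 0 < d2 := hd2
  -- partial trace over the second factor
  set M1 : Matrix (Fin d1) (Fin d1) ℂ :=
    Matrix.of fun i i' => ∑ j, U (i, j) (i', j) with hM1
  have htr1 : M1.trace = U.trace := by
    simp [hM1, Matrix.trace, Matrix.diag, Fintype.sum_prod_type]
  obtain ⟨ψ1, hψ1, hv1⟩ := trace_div_mem hd1' M1
  -- compression by ψ1
  set M2 : Matrix (Fin d2) (Fin d2) ℂ :=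
    Matrix.of fun j j' => ∑ i, ∑ i', (starRingEnd ℂ) (ψ1 i) * (U (i, j) (i', j') * ψ1 i')
    with hM2
  have htr2 : M2.trace = U.trace / d1 := by
    rw [← htr1, ← hv1, aux_inner_toEuclideanLin]
    simp only [hM2, Matrix.trace, Matrix.diag_apply, Matrix.of_apply, hM1, Finset.sum_mul,
      Finset.mul_sum]
    rw [Finset.sum_comm]
    exact Finset.sum_congr rfl fun i _ => Finset.sum_comm
  obtain ⟨ψ2, hψ2, hv2⟩ := trace_div_mem hd2' M2
  -- the key identity
  have key : ⟪tensorVec ψ1 ψ2, Matrix.toEuclideanLin U (tensorVec ψ1 ψ2)⟫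
      = ⟪ψ2, Matrix.toEuclideanLin M2 ψ2⟫ := by
    have lhs : ⟪tensorVec ψ1 ψ2, Matrix.toEuclideanLin U (tensorVec ψ1 ψ2)⟫
        = ∑ i, ∑ j, ∑ i', ∑ j', (starRingEnd ℂ) (ψ1 i) * (starRingEnd ℂ) (ψ2 j)
            * U (i, j) (i', j') * ψ1 i' * ψ2 j' := by
      rw [aux_inner_toEuclideanLin, Fintype.sum_prod_type]
      refine Finset.sum_congr rfl fun i _ => Finset.sum_congr rfl fun j _ => ?_
      rw [Fintype.sum_prod_type]
      refine Finset.sum_congr rfl fun i' _ => Finset.sum_congr rfl fun j' _ => ?_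
      simp only [tensorVec]
      rw [map_mul]
      ring
    have rhs : ⟪ψ2, Matrix.toEuclideanLin M2 ψ2⟫
        = ∑ j, ∑ j', ∑ i, ∑ i', (starRingEnd ℂ) (ψ1 i) * (starRingEnd ℂ) (ψ2 j)
            * U (i, j) (i', j') * ψ1 i' * ψ2 j' := by
      rw [aux_inner_toEuclideanLin]
      refine Finset.sum_congr rfl fun j _ => Finset.sum_congr rfl fun j' _ => ?_
      simp only [hM2, Matrix.of_apply, Finset.sum_mul, Finset.mul_sum]
      refine Finset.sum_congr rfl fun i _ => Finset.sum_congr rfl fun i' _ => ?_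
      ring
    rw [lhs, rhs]
    conv_rhs => rw [sum4]
  have hval : ⟪tensorVec ψ1 ψ2, Matrix.toEuclideanLin U (tensorVec ψ1 ψ2)⟫
      = U.trace / ((d1 : ℂ) * d2) := by
    rw [key, hv2, htr2, div_div]
  have hmem : U.trace / ((d1 : ℂ) * d2) ∈ prodNumRange U :=
    ⟨ψ1, ψ2, hψ1, hψ2, hval⟩
  refine ⟨hmem, ?_⟩
  have habs : ‖U.trace / ((d1 : ℂ) * d2)‖
      = ‖U.trace‖ / ((d1 : ℝ) * d2) := by
    rw [norm_div, norm_mul]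
    simp [Complex.norm_natCast]
  have hbdd : BddBelow ((fun z : ℂ => ‖z‖) '' prodNumRange U) := by
    refine ⟨0, ?_⟩
    rintro r ⟨z, _, rfl⟩
    exact norm_nonneg z
  calc sInf ((fun z : ℂ => ‖z‖) '' prodNumRange U)
      ≤ ‖U.trace / ((d1 : ℂ) * d2)‖ :=
        csInf_le hbdd ⟨_, hmem, rfl⟩
    _ = ‖U.trace‖ / ((d1 : ℝ) * d2) := habs
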